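/- Let α > 0 and m > 1, and define θ̂(ψ) = (1 + (-α·min(ψ,0))^m)^(-(m-1)/m). Then θ̂ is differentiable at every ψ ∈ ℝ, its derivative satisfies θ̂'(ψ) = (m-1)·α^m·(-ψ)^(m-1)·(1 + (-αψ)^m)^(-(2m-1)/m) ≥ 0 for ψ < 0 and θ̂'(ψ) = 0 for ψ ≥ 0, and the derivative θ̂' is bounded on ℝ, i.e. sup_{ψ ∈ ℝ} θ̂'(ψ) < ∞. -/

import Mathlib

open Filter Asymptotics

-- key inequality for boundedness
lemma vg_key (m : ℝ) (hm : 1 < m) {t : ℝ} (ht : 0 < t) :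
    t ^ (m - 1) * (1 + t ^ m) ^ (-((2 * m - 1) / m)) ≤ 1 := by
  have hm0 : 0 < m := by linarith
  have hb : (0:ℝ) < 1 + t ^ m := by positivity
  have hq : 0 ≤ (2 * m - 1) / m := by
    apply div_nonneg <;> linarith
  rw [Real.rpow_neg hb.le, ← div_eq_mul_inv, div_le_one (Real.rpow_pos_of_pos hb _)]
  rcases le_total t 1 with h | h
  · calc t ^ (m - 1) ≤ 1 := Real.rpow_le_one ht.le h (by linarith)
      _ = (1:ℝ) ^ ((2*m-1)/m) := (Real.one_rpow _).symm
      _ ≤ (1 + t ^ m) ^ ((2*m-1)/m) := by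
          apply Real.rpow_le_rpow zero_le_one (by nlinarith [Real.rpow_nonneg ht.le m]) hq
  · calc t ^ (m - 1) ≤ t ^ (2 * m - 1) :=
        Real.rpow_le_rpow_of_exponent_le h (by linarith)
      _ = (t ^ m) ^ ((2*m-1)/m) := by
          rw [← Real.rpow_mul ht.le]
          congr 1
          field_simp
      _ ≤ (1 + t ^ m) ^ ((2*m-1)/m) :=
          Real.rpow_le_rpow (by positivity) (by linarith) hq

/-- The Van Genuchten saturation `θ̂` is differentiable everywhere; its derivative equals
`(m-1)·α^m·(-ψ)^(m-1)·(1 + (-αψ)^m)^(-(2m-1)/m) ≥ 0` for `ψ < 0` and `0` for `ψ ≥ 0`,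
and the derivative is bounded on `ℝ`. -/
theorem vanGenuchten_saturation_deriv (α m : ℝ) (hα : 0 < α) (hm : 1 < m)
    (θhat θhat' : ℝ → ℝ)
    (hθhat : ∀ ψ : ℝ, θhat ψ = (1 + (-(α * min ψ 0)) ^ m) ^ (-((m - 1) / m)))
    (hθhat' : ∀ ψ : ℝ, θhat' ψ =
      if ψ < 0 then
        (m - 1) * α ^ m * (-ψ) ^ (m - 1) * (1 + (-(α * ψ)) ^ m) ^ (-((2 * m - 1) / m))
      else 0) :
    (∀ ψ : ℝ, HasDerivAt θhat (θhat' ψ) ψ) ∧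
      (∀ ψ : ℝ, ψ < 0 → 0 ≤ θhat' ψ) ∧
      ∃ M : ℝ, ∀ ψ : ℝ, θhat' ψ ≤ M := by
  have hm0 : 0 < m := by linarith
  have hαm : α ^ m = α * α ^ (m - 1) := by
    rw [show m = 1 + (m - 1) by ring, Real.rpow_add hα, Real.rpow_one]
    ring_nf
  refine ⟨?_, ?_, ?_⟩
  · -- differentiability
    intro ψ
    rcases lt_trichotomy ψ 0 with hψ | hψ | hψ
    · -- ψ < 0
      have hψ' : 0 < -ψ := by linarith
      have htpos : 0 < -(α * ψ) := by nlinarith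
      have hu : HasDerivAt (fun x : ℝ => -(α * x)) (-α) ψ := by
        simpa [Pi.neg_def] using ((hasDerivAt_id ψ).const_mul α).neg
      have hv := hu.rpow_const (p := m) (Or.inl htpos.ne')
      have hw := (hv.const_add 1).rpow_const (p := -((m - 1) / m))
        (Or.inl (by positivity : (0:ℝ) < 1 + (-(α * ψ)) ^ m).ne')
      have heq : θhat =ᶠ[nhds ψ]
          fun x => (1 + (-(α * x)) ^ m) ^ (-((m - 1) / m)) := by
        filter_upwards [eventually_lt_nhds hψ] with x hx
        rw [hθhat x, min_eq_left hx.le]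
      have hD := hw.congr_of_eventuallyEq heq
      have hval : θhat' ψ =
          -α * m * (-(α * ψ)) ^ (m - 1) * -((m - 1) / m) *
            (1 + (-(α * ψ)) ^ m) ^ (-((m - 1) / m) - 1) := by
        rw [hθhat' ψ, if_pos hψ]
        have he : -((m - 1) / m) - 1 = -((2 * m - 1) / m) := by
          field_simp; ring
        have hmm : (-(α * ψ)) ^ (m - 1) = α ^ (m - 1) * (-ψ) ^ (m - 1) := by
          rw [show -(α * ψ) = α * (-ψ) by ring, Real.mul_rpow hα.le hψ'.le]
        rw [he, hmm, hαm]
        field_simp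
      rw [hval]
      exact hD
    · -- ψ = 0
      subst hψ
      have hG0 : (-(α * min (0:ℝ) 0)) ^ m = 0 := by
        simp [Real.zero_rpow hm0.ne']
      have hO : (fun ψ : ℝ => (-(α * min ψ 0)) ^ m) =o[nhds (0:ℝ)] fun ψ => ψ := by
        rw [isLittleO_iff]
        intro c hc
        have habs : Tendsto (fun ψ : ℝ => α ^ m * |ψ| ^ (m - 1)) (nhds 0) (nhds 0) := by
          have h0 : Tendsto (fun ψ : ℝ => |ψ|) (nhds (0:ℝ)) (nhds 0) := by
            simpa using continuous_abs.tendsto (0:ℝ)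
          have h2 : ContinuousAt (fun v : ℝ => v ^ (m - 1)) 0 :=
            Real.continuousAt_rpow_const 0 (m - 1) (Or.inr (by linarith))
          have h3 : Tendsto (fun ψ : ℝ => |ψ| ^ (m - 1)) (nhds (0:ℝ)) (nhds 0) := by
            have := h2.tendsto.comp h0
            simpa [Function.comp_def, Real.zero_rpow (by linarith : m - 1 ≠ 0)] using this
          simpa using h3.const_mul (α ^ m)
        filter_upwards [habs.eventually (gt_mem_nhds hc)] with ψ hψ
        rcases eq_or_ne ψ 0 with rfl | hne
        · simp [Real.zero_rpow hm0.ne']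
        · have h1 : 0 ≤ -(α * min ψ 0) := by
            have : min ψ 0 ≤ 0 := min_le_right _ _
            nlinarith
          have h2 : -(α * min ψ 0) ≤ α * |ψ| := by
            have hmin : -|ψ| ≤ min ψ 0 := by
              rcases le_total ψ 0 with h | h
              · rw [min_eq_left h]; cases abs_cases ψ <;> linarith
              · rw [min_eq_right h]; exact neg_nonpos.mpr (abs_nonneg ψ)
            nlinarith [abs_nonneg ψ]
          have h3 : (-(α * min ψ 0)) ^ m ≤ (α * |ψ|) ^ m :=
            Real.rpow_le_rpow h1 h2 hm0.le
          have h4 : (α * |ψ|) ^ m = α ^ m * (|ψ| ^ (m - 1) * |ψ|) := by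
            rw [Real.mul_rpow hα.le (abs_nonneg ψ),
              show m = (m - 1) + 1 by ring,
              Real.rpow_add (abs_pos.mpr hne), Real.rpow_one]
            norm_num
          rw [Real.norm_eq_abs, Real.norm_eq_abs,
            abs_of_nonneg (Real.rpow_nonneg h1 m)]
          have h5 : α ^ m * (|ψ| ^ (m - 1) * |ψ|) ≤ c * |ψ| := by
            nlinarith [abs_nonneg ψ, Real.rpow_nonneg (abs_nonneg ψ) (m-1),
              Real.rpow_pos_of_pos hα m]
          calc (-(α * min ψ 0)) ^ m ≤ α ^ m * (|ψ| ^ (m-1) * |ψ|) := by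
                rw [← h4]; exact h3
            _ ≤ c * |ψ| := h5
      have hG : HasDerivAt (fun ψ : ℝ => (-(α * min ψ 0)) ^ m) 0 0 := by
        rw [hasDerivAt_iff_isLittleO]
        simpa [hG0, Real.zero_rpow hm0.ne'] using hO
      have hne : (1 + (-(α * min (0:ℝ) 0)) ^ m) ≠ 0 := by
        rw [hG0]; norm_num
      have h := (hG.const_add 1).rpow_const (p := -((m - 1) / m)) (Or.inl hne)
      have hfun : θhat = fun ψ => (1 + (-(α * min ψ 0)) ^ m) ^ (-((m - 1) / m)) :=
        funext hθhat
      have hz : θhat' 0 = 0 := by rw [hθhat' 0, if_neg (lt_irrefl 0)]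
      rw [hz, hfun]
      simpa using h
    · -- ψ > 0
      have heq : θhat =ᶠ[nhds ψ] fun _ => (1:ℝ) := by
        filter_upwards [eventually_gt_nhds hψ] with x hx
        rw [hθhat x, min_eq_right hx.le]
        simp [Real.zero_rpow hm0.ne']
      have hz : θhat' ψ = 0 := by rw [hθhat' ψ, if_neg (not_lt.mpr hψ.le)]
      rw [hz]
      exact (hasDerivAt_const ψ (1:ℝ)).congr_of_eventuallyEq heq
  · -- nonnegativity
    intro ψ hψ
    rw [hθhat' ψ, if_pos hψ]
    have h1 : 0 < -ψ := by linarith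
    have h2 : 0 < 1 + (-(α * ψ)) ^ m := by
      nlinarith [Real.rpow_nonneg (show 0 ≤ -(α*ψ) by nlinarith) m]
    exact mul_nonneg (mul_nonneg (mul_nonneg (by linarith)
      (Real.rpow_pos_of_pos hα m).le) (Real.rpow_nonneg h1.le _))
      (Real.rpow_nonneg h2.le _)
  · -- boundedness
    refine ⟨(m - 1) * α, fun ψ => ?_⟩
    rw [hθhat' ψ]
    split_ifs with hψ
    · have hψ' : 0 < -ψ := by linarith
      have ht : 0 < α * -ψ := by positivity
      have key := vg_key m hm ht
      have hmm : (α * -ψ) ^ (m - 1) = α ^ (m - 1) * (-ψ) ^ (m - 1) :=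
        Real.mul_rpow hα.le hψ'.le
      rw [hmm] at key
      rw [show -(α * ψ) = α * -ψ by ring, hαm]
      have hA : 0 ≤ α ^ (m - 1) := Real.rpow_nonneg hα.le _
      have hB : 0 ≤ (-ψ) ^ (m - 1) := Real.rpow_nonneg hψ'.le _
      have hX : 0 ≤ (1 + (α * -ψ) ^ m) ^ (-((2 * m - 1) / m)) :=
        Real.rpow_nonneg (by positivity) _
      nlinarith [mul_le_mul_of_nonneg_left key
        (show (0:ℝ) ≤ (m - 1) * α by nlinarith)]
    · nlinarith
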